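/- SDLS⁻(ℒ^{ℵ₀}_{stat}, <ℵ₂) implies the reflection principle RP: for every regular λ ≥ ℵ₂, every stationary S ⊆ [λ]^{ℵ₀}, and every X ∈ [λ]^{ℵ₁}, there is Y ∈ [λ]^{ℵ₁} with cf(Y) = ω₁, X ⊆ Y, and S ∩ [Y]^{ℵ₀} stationary in [Y]^{ℵ₀}. -/

import Mathlib

open Cardinal FirstOrder

namespace StatLogic

/-- `C` is club in `[W]^{ℵ₀}`: a collection of countable subsets of `W` which is
cofinal in `([W]^{ℵ₀}, ⊆)` and closed under unions of increasing `ω`-chains. -/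
def CtbClubIn {α : Type*} (W : Set α) (C : Set (Set α)) : Prop :=
  (∀ c ∈ C, c ⊆ W ∧ c.Countable) ∧
  (∀ x : Set α, x ⊆ W → x.Countable → ∃ c ∈ C, x ⊆ c) ∧
  (∀ f : ℕ → Set α, (∀ n, f n ∈ C) → Monotone f → (⋃ n, f n) ∈ C)

/-- `S` is stationary in `[W]^{ℵ₀}`: it meets every club subset of `[W]^{ℵ₀}`. -/
def CtbStatIn {α : Type*} (W : Set α) (S : Set (Set α)) : Prop :=
  ∀ C : Set (Set α), CtbClubIn W C → (S ∩ C).Nonempty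

/-- Formulas of the stationary logic `ℒ^{ℵ₀}_{stat}` over the first-order language
`L`, with `n` free first-order and `m` free (weak monadic second-order) variables.
The second-order variables range over countable subsets of the structure and the
second-order quantifier `stat` means "for stationarily many countable subsets". -/
inductive StatFormula (L : FirstOrder.Language.{0, 0}) : ℕ → ℕ → Type
  | equal {n m : ℕ} (t₁ t₂ : L.Term (Fin n)) : StatFormula L n m
  | rel {n m l : ℕ} (R : L.Relations l) (ts : Fin l → L.Term (Fin n)) :
      StatFormula L n m
  | mem {n m : ℕ} (x : Fin n) (X : Fin m) : StatFormula L n m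
  | not {n m : ℕ} (φ : StatFormula L n m) : StatFormula L n m
  | and {n m : ℕ} (φ ψ : StatFormula L n m) : StatFormula L n m
  | exFO {n m : ℕ} (φ : StatFormula L (n + 1) m) : StatFormula L n m
  | stat {n m : ℕ} (φ : StatFormula L n (m + 1)) : StatFormula L n m

/-- Satisfaction for `ℒ^{ℵ₀}_{stat}`-formulas in an `L`-structure `A`, with the
second-order quantifier `stat X φ` interpreted as: the set of countable `U ⊆ A`
with `φ[U]` is stationary in `[A]^{ℵ₀}`. -/
def Realize (L : FirstOrder.Language.{0, 0}) (A : Type) [L.Structure A] :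
    ∀ {n m : ℕ}, StatFormula L n m → (Fin n → A) → (Fin m → Set A) → Prop
  | _, _, .equal t₁ t₂, v, _ => t₁.realize v = t₂.realize v
  | _, _, .rel R ts, v, _ => FirstOrder.Language.Structure.RelMap R (fun i => (ts i).realize v)
  | _, _, .mem x X, v, w => v x ∈ w X
  | _, _, .not φ, v, w => ¬ Realize L A φ v w
  | _, _, .and φ ψ, v, w => Realize L A φ v w ∧ Realize L A ψ v w
  | _, _, .exFO φ, v, w => ∃ a : A, Realize L A φ (Fin.snoc v a) w
  | _, _, .stat φ, v, w =>
      CtbStatIn Set.univ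
        {U : Set A | U.Countable ∧ Realize L A φ v (Fin.snoc w U)}

/-- The strong downward Löwenheim–Skolem theorem `SDLS⁻(ℒ^{ℵ₀}_{stat}, <κ)`:
every uncountable structure of a countable signature has a substructure of
cardinality `<κ` which is `≺⁻`-elementary for stationary logic, i.e. elementary
with respect to all `ℒ^{ℵ₀}_{stat}`-formulas without free second-order
variables (the stationary quantifier being interpreted internally in the
substructure and in the full structure respectively). -/
def SDLSminus (κ : Cardinal.{0}) : Prop :=
  ∀ (L : FirstOrder.Language.{0, 0}) (A : Type) [inst : L.Structure A],
    Countable (Σ n, L.Functions n) → Countable (Σ n, L.Relations n) →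
    Uncountable A →
    ∃ S : L.Substructure A, Cardinal.mk ↥S < κ ∧
      ∀ (n : ℕ) (φ : StatFormula L n 0) (v : Fin n → ↥S),
        Realize L ↥S φ v Fin.elim0 ↔
          Realize L A φ (fun i => (v i : A)) Fin.elim0

/-- The strong downward Löwenheim–Skolem theorem `SDLS(ℒ^{ℵ₀}_{stat}, <κ)`:
as `SDLS⁻`, but with full elementarity for `ℒ^{ℵ₀}_{stat}`, allowing free
second-order parameters, i.e. countable subsets of the substructure. -/
def SDLSfull (κ : Cardinal.{0}) : Prop :=
  ∀ (L : FirstOrder.Language.{0, 0}) (A : Type) [inst : L.Structure A],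
    Countable (Σ n, L.Functions n) → Countable (Σ n, L.Relations n) →
    Uncountable A →
    ∃ S : L.Substructure A, Cardinal.mk ↥S < κ ∧
      ∀ (n m : ℕ) (φ : StatFormula L n m) (v : Fin n → ↥S) (w : Fin m → Set A),
        (∀ i, (w i).Countable ∧ w i ⊆ (S : Set A)) →
        (Realize L ↥S φ v (fun i => {x : ↥S | (x : A) ∈ w i}) ↔
          Realize L A φ (fun i => (v i : A)) w)

end StatLogic

open StatLogic

/-- `Y` (a subset of a linear order) has cofinality `ω₁`: the least cardinality of a
subset of `Y` cofinal in `Y` is `ℵ₁`. -/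
def HasCofinalityAleph1 {α : Type} [LinearOrder α] (Y : Set α) : Prop :=
  (∃ Z ⊆ Y, (∀ y ∈ Y, ∃ z ∈ Z, y ≤ z) ∧ Cardinal.mk ↥Z = Cardinal.aleph 1) ∧
  (∀ Z ⊆ Y, (∀ y ∈ Y, ∃ z ∈ Z, y ≤ z) → Cardinal.aleph 1 ≤ Cardinal.mk ↥Z)

/-- The reflection principle `RP`: for every regular `λ ≥ ℵ₂`, every stationary
`S ⊆ [λ]^{ℵ₀}` and every `X ∈ [λ]^{ℵ₁}` there is `Y ∈ [λ]^{ℵ₁}` with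
`cf(Y) = ω₁`, `X ⊆ Y` and `S ∩ [Y]^{ℵ₀}` stationary in `[Y]^{ℵ₀}`.
(The cardinal `λ` is represented by its canonical well-ordered set `λ.ord.toType`.) -/
def RP : Prop :=
  ∀ lam : Cardinal.{0}, lam.IsRegular → Cardinal.aleph 2 ≤ lam →
    ∀ S : Set (Set lam.ord.ToType), (∀ x ∈ S, x.Countable) →
      CtbStatIn Set.univ S →
      ∀ X : Set lam.ord.ToType, Cardinal.mk ↥X = Cardinal.aleph 1 →
        ∃ Y : Set lam.ord.ToType, Cardinal.mk ↥Y = Cardinal.aleph 1 ∧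
          HasCofinalityAleph1 Y ∧ X ⊆ Y ∧ CtbStatIn Y {x ∈ S | x ⊆ Y}


namespace SDLSAux
open Set StatLogic Ordinal FirstOrder.Language

/-! ### Club and stationarity basics -/

lemma club_countable {A : Type*} : CtbClubIn (univ : Set A) {x : Set A | x.Countable} :=
  ⟨fun c hc => ⟨subset_univ c, hc⟩, fun x _ hx => ⟨x, hx, subset_rfl⟩,
   fun f hf _ => countable_iUnion hf⟩

lemma club_contains {A : Type*} (p : Set A) (hp : p.Countable) :
    CtbClubIn (univ : Set A) {x : Set A | x.Countable ∧ p ⊆ x} :=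
  ⟨fun c hc => ⟨subset_univ c, hc.1⟩,
   fun x _ hx => ⟨x ∪ p, ⟨hx.union hp, subset_union_right⟩, subset_union_left⟩,
   fun f hf _ => ⟨countable_iUnion fun n => (hf n).1,
     ((hf 0).2).trans (subset_iUnion f 0)⟩⟩

lemma stat_mono {A : Type*} {W : Set A} {S T : Set (Set A)} (h : CtbStatIn W S)
    (hST : S ⊆ T) : CtbStatIn W T :=
  fun C hC => ((h C hC).imp fun _ hx => ⟨hST hx.1, hx.2⟩)

lemma finset_subset_iUnion {β : Type*} {x : ℕ → Set β} (hx : Monotone x) {e : Finset β}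
    (he : ↑e ⊆ ⋃ n, x n) : ∃ k, ↑e ⊆ x k := by
  classical
  induction e using Finset.induction_on with
  | empty => exact ⟨0, by simp⟩
  | @insert a s ha ih =>
    obtain ⟨k₁, hk₁⟩ := ih (fun b hb => he (Finset.mem_coe.2
      (Finset.mem_insert_of_mem (Finset.mem_coe.1 hb))))
    obtain ⟨k₂, hk₂⟩ := Set.mem_iUnion.1 (he (Finset.mem_coe.2 (Finset.mem_insert_self a s)))
    refine ⟨max k₁ k₂, ?_⟩
    intro b hb
    rcases Finset.mem_insert.1 hb with rfl | hb
    · exact hx (le_max_right k₁ k₂) hk₂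
    · exact hx (le_max_left k₁ k₂) (hk₁ hb)

/-! ### Lifting stationarity along an injection -/

lemma lift_stat {A β : Type*} (f : β → A) (hf : Function.Injective f) {S : Set (Set β)}
    (hS : CtbStatIn (univ : Set β) S) :
    CtbStatIn (univ : Set A) {U : Set A | U.Countable ∧ f ⁻¹' U ∈ S} := by
  classical
  intro C hC
  obtain ⟨hCmem, hCcof, hCch⟩ := hC
  set Phi : Set A → Set A := fun u =>
    if h : u.Countable then (hCcof u (subset_univ u) h).choose else ∅ with hPhi
  have hPhiC : ∀ u : Set A, u.Countable → Phi u ∈ C := by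
    intro u hu; rw [hPhi]; simp only [dif_pos hu]
    exact (hCcof u (subset_univ u) hu).choose_spec.1
  have hPhiSub : ∀ u : Set A, u.Countable → u ⊆ Phi u := by
    intro u hu; rw [hPhi]; simp only [dif_pos hu]
    exact (hCcof u (subset_univ u) hu).choose_spec.2
  have hPhiCt : ∀ u : Set A, u.Countable → (Phi u).Countable := fun u hu =>
    (hCmem _ (hPhiC u hu)).2
  set W : ℕ → Finset A → Set A := fun n =>
    Nat.rec (fun e => Phi ↑e)
      (fun _ Wn e => Phi (↑e ∪ ⋃ x ∈ (↑e.powerset : Set (Finset A)), Wn x)) n with hWdef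
  have hWsucc : ∀ n e, W (n+1) e = Phi (↑e ∪ ⋃ x ∈ (↑e.powerset : Set (Finset A)), W n x) :=
    fun _ _ => rfl
  have hWct : ∀ (n : ℕ) (e : Finset A),
      (W n e).Countable ∧ W n e ∈ C ∧ ↑e ⊆ W n e := by
    intro n
    induction n with
    | zero =>
      intro e
      have h : (↑e : Set A).Countable := e.finite_toSet.countable
      exact ⟨hPhiCt _ h, hPhiC _ h, hPhiSub _ h⟩
    | succ n ih =>
      intro e
      have h : ((↑e : Set A) ∪ ⋃ x ∈ (↑e.powerset : Set (Finset A)), W n x).Countable := by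
        refine (e.finite_toSet.countable).union ?_
        exact Set.Countable.biUnion (e.powerset.finite_toSet.countable) fun x _ => (ih x).1
      rw [hWsucc]
      exact ⟨hPhiCt _ h, hPhiC _ h, (subset_union_left).trans (hPhiSub _ h)⟩
  have hWstep : ∀ (n : ℕ) (e e' : Finset A), e ⊆ e' → W n e ⊆ W (n+1) e' := by
    intro n e e' hee
    rw [hWsucc]
    have h : ((↑e' : Set A) ∪ ⋃ x ∈ (↑e'.powerset : Set (Finset A)), W n x).Countable := by
      refine (e'.finite_toSet.countable).union ?_
      exact Set.Countable.biUnion (e'.powerset.finite_toSet.countable) fun x _ => (hWct n x).1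
    refine Subset.trans ?_ (hPhiSub _ h)
    intro b hb
    exact Or.inr (Set.mem_biUnion (by simpa using Finset.mem_powerset.2 hee) hb)
  set D : Set (Set β) :=
    {x | x.Countable ∧ ∀ (n : ℕ) (e : Finset β), ↑e ⊆ x → f ⁻¹' (W n (e.image f)) ⊆ x} with hD
  have hDclub : CtbClubIn (univ : Set β) D := by
    refine ⟨fun c hc => ⟨subset_univ c, hc.1⟩, ?_, ?_⟩
    · intro x₀ _ hx₀
      set y : ℕ → Set β := fun k => Nat.rec x₀
        (fun _ yk => yk ∪ ⋃ (p : ℕ × {e : Finset β // ↑e ⊆ yk}),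
          f ⁻¹' (W p.1 (p.2.1.image f))) k with hy
      have hysucc : ∀ k, y (k+1) = y k ∪ ⋃ (p : ℕ × {e : Finset β // ↑e ⊆ y k}),
          f ⁻¹' (W p.1 (p.2.1.image f)) := fun _ => rfl
      have hyct : ∀ k, (y k).Countable := by
        intro k; induction k with
        | zero => exact hx₀
        | succ k ih =>
          rw [hysucc]
          have hctsub : {e : Finset β | ↑e ⊆ y k}.Countable := by
            have h2 : {t : Set β | t.Finite ∧ t ⊆ y k}.Countable :=
              Set.countable_setOf_finite_subset ih
            have h3 : ((fun e : Finset β => (↑e : Set β)) ⁻¹'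
                {t : Set β | t.Finite ∧ t ⊆ y k}) = {e : Finset β | ↑e ⊆ y k} := by
              ext e; simp [Finset.finite_toSet]
            rw [← h3]
            exact h2.preimage (Finset.coe_injective)
          have : Countable {e : Finset β // ↑e ⊆ y k} := hctsub.to_subtype
          exact ih.union (countable_iUnion fun p => ((hWct p.1 _).1).preimage hf)
      have hymono : Monotone y := monotone_nat_of_le_succ fun k => by
        rw [hysucc]; exact subset_union_left
      refine ⟨⋃ k, y k, ⟨countable_iUnion hyct, ?_⟩, (subset_iUnion y 0 : x₀ ⊆ _)⟩
      intro n e he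
      obtain ⟨k, hk⟩ := finset_subset_iUnion hymono he
      have hsub : f ⁻¹' (W n (e.image f)) ⊆ y (k+1) := by
        rw [hysucc]
        intro b hb
        exact Or.inr (Set.mem_iUnion.2 ⟨(n, ⟨e, hk⟩), hb⟩)
      exact hsub.trans (subset_iUnion y (k+1))
    · intro g hg hmono
      refine ⟨countable_iUnion fun n => (hg n).1, ?_⟩
      intro n e he
      obtain ⟨k, hk⟩ := finset_subset_iUnion hmono he
      exact ((hg k).2 n e hk).trans (subset_iUnion g k)
  obtain ⟨x, hxS, hxD⟩ := hS D hDclub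
  obtain ⟨g, hgmono, hgU⟩ : ∃ g : ℕ → Finset β, Monotone g ∧ (⋃ n, (↑(g n) : Set β)) = x := by
    rcases eq_empty_or_nonempty x with h | h
    · exact ⟨fun _ => ∅, monotone_const, by simp [h]⟩
    · obtain ⟨u, hu⟩ := hxD.1.exists_eq_range h
      refine ⟨fun n => (Finset.range (n+1)).image u, ?_, ?_⟩
      · intro a b hab
        exact Finset.image_subset_image (Finset.range_subset_range.2 (by omega))
      · rw [hu]; ext b
        simp only [Set.mem_iUnion, Finset.coe_image, Set.mem_image, Finset.mem_coe,
          Finset.mem_range, Set.mem_range]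
        constructor
        · rintro ⟨n, k, -, rfl⟩; exact ⟨k, rfl⟩
        · rintro ⟨k, rfl⟩; exact ⟨k, k, by omega, rfl⟩
  set V : ℕ → Set A := fun n => W n ((g n).image f) with hV
  have hVmono : Monotone V := monotone_nat_of_le_succ fun n =>
    hWstep n _ _ (Finset.image_subset_image (hgmono (Nat.le_succ n)))
  have hUC : (⋃ n, V n) ∈ C := hCch V (fun n => (hWct n _).2.1) hVmono
  have hfx : f ⁻¹' (⋃ n, V n) = x := by
    apply Subset.antisymm
    · rw [Set.preimage_iUnion]
      apply Set.iUnion_subset; intro n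
      exact hxD.2 n (g n) (by rw [← hgU]; exact subset_iUnion (fun n => (↑(g n) : Set β)) n)
    · rw [← hgU]
      apply Set.iUnion_subset; intro n
      intro b hb
      have hmem : f b ∈ W n ((g n).image f) :=
        (hWct n _).2.2 (Finset.mem_coe.2 (Finset.mem_image_of_mem f hb))
      exact Set.mem_iUnion.2 ⟨n, hmem⟩
  exact ⟨⋃ n, V n, ⟨(hCmem _ hUC).2, by rw [hfx]; exact hxS⟩, hUC⟩

/-! ### Projecting stationarity down to a subset -/

lemma project_stat {M α : Type*} {Y : Set α} (e : ↥Y → M) (he : Function.Injective e)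
    {T : Set (Set M)} (hT : CtbStatIn (univ : Set M) T) {S : Set (Set α)}
    (hmatch : ∀ U ∈ T, ∃ s ∈ S, s ⊆ Y ∧ ∀ a : ↥Y, (e a ∈ U ↔ (a : α) ∈ s)) :
    CtbStatIn Y {x | x ∈ S ∧ x ⊆ Y} := by
  intro C hC
  obtain ⟨hCmem, hCcof, hCch⟩ := hC
  set proj : Set M → Set α := fun U => Subtype.val '' (e ⁻¹' U) with hproj
  have hprojY : ∀ U, proj U ⊆ Y := by rintro U a ⟨b, -, rfl⟩; exact b.2
  have hprojct : ∀ U : Set M, U.Countable → (proj U).Countable := fun U hU =>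
    (hU.preimage he).image _
  have hprojUn : ∀ (g : ℕ → Set M), proj (⋃ n, g n) = ⋃ n, proj (g n) := by
    intro g; rw [hproj]; simp [Set.preimage_iUnion, Set.image_iUnion]
  set Cs : Set (Set M) := {U | U.Countable ∧ proj U ∈ C} with hCs
  have hCsclub : CtbClubIn (univ : Set M) Cs := by
    refine ⟨fun c hc => ⟨subset_univ c, hc.1⟩, ?_, ?_⟩
    · intro u _ hu
      obtain ⟨c, hcC, hcsub⟩ := hCcof (proj u) (hprojY u) (hprojct u hu)
      have hcY : c ⊆ Y := (hCmem c hcC).1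
      have hcct : c.Countable := (hCmem c hcC).2
      refine ⟨u ∪ e '' {a : ↥Y | (a : α) ∈ c}, ⟨?_, ?_⟩, subset_union_left⟩
      · exact hu.union ((hcct.preimage Subtype.val_injective).image e)
      · have h2 : proj (u ∪ e '' {a : ↥Y | (a : α) ∈ c}) =
            proj u ∪ proj (e '' {a : ↥Y | (a : α) ∈ c}) := by
          rw [hproj]; simp [Set.preimage_union, Set.image_union]
        rw [h2]
        show proj u ∪ Subtype.val '' (e ⁻¹' (e '' {a : ↥Y | (a : α) ∈ c})) ∈ C
        rw [Set.preimage_image_eq _ he]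
        have h3 : (Subtype.val '' {a : ↥Y | (a : α) ∈ c}) = c := by
          have h4 : (Subtype.val '' {a : ↥Y | (a : α) ∈ c}) = Y ∩ c := by
            ext a
            simp only [Set.mem_image, Set.mem_setOf_eq, Set.mem_inter_iff]
            constructor
            · rintro ⟨b, hb, rfl⟩; exact ⟨b.2, hb⟩
            · rintro ⟨haY, hac⟩; exact ⟨⟨a, haY⟩, hac, rfl⟩
          rw [h4, Set.inter_eq_self_of_subset_right hcY]
        rw [h3]
        simpa [Set.union_eq_self_of_subset_left hcsub] using hcC
    · intro g hg hmono
      refine ⟨countable_iUnion fun n => (hg n).1, ?_⟩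
      rw [hprojUn]
      refine hCch _ (fun n => (hg n).2) ?_
      intro a b hab
      exact Set.image_mono (Set.preimage_mono (fun x hx => hmono hab hx))
  obtain ⟨U, hUT, hUc⟩ := hT Cs hCsclub
  obtain ⟨s, hsS, hsY, hiff⟩ := hmatch U hUT
  have hps : proj U = s := by
    apply Subset.antisymm
    · rintro a ⟨b, hb, rfl⟩; exact (hiff b).1 hb
    · intro a ha; exact ⟨⟨a, hsY ha⟩, (hiff ⟨a, hsY ha⟩).2 ha, rfl⟩
  exact ⟨s, ⟨hsS, hsY⟩, hps ▸ hUc.2⟩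

/-! ### The canonical well-order of a cardinal -/

noncomputable def tyin (lam : Cardinal.{0}) (a : lam.ord.ToType) : Ordinal.{0} :=
  @typein lam.ord.ToType (· < ·) isWellOrder_lt a

lemma tyin_lt (lam : Cardinal.{0}) (a : lam.ord.ToType) : tyin lam a < lam.ord :=
  typein_lt_self a

lemma tyin_lt_tyin {lam : Cardinal.{0}} {a b : lam.ord.ToType} :
    tyin lam a < tyin lam b ↔ a < b :=
  @typein_lt_typein lam.ord.ToType (· < ·) isWellOrder_lt a b

lemma type_lt' (lam : Cardinal.{0}) :
    @type lam.ord.ToType (· < ·) isWellOrder_lt = lam.ord := type_toType _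

noncomputable def enm (lam : Cardinal.{0}) (o : Ordinal.{0}) (h : o < lam.ord) :
    lam.ord.ToType :=
  (@enum lam.ord.ToType (· < ·) isWellOrder_lt) ⟨o, by rw [type_lt']; exact h⟩

lemma tyin_enm (lam : Cardinal.{0}) (o : Ordinal.{0}) (h : o < lam.ord) :
    tyin lam (enm lam o h) = o :=
  @typein_enum lam.ord.ToType (· < ·) isWellOrder_lt o _

lemma card_tyin (lam : Cardinal.{0}) (a : lam.ord.ToType) :
    #{y : lam.ord.ToType | y < a} = (tyin lam a).card :=
  @card_typein lam.ord.ToType (· < ·) isWellOrder_lt a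

def Pset (lam : Cardinal.{0}) : Set lam.ord.ToType := {a | {b | b < a}.Countable}

lemma mem_Pset_iff {lam : Cardinal.{0}} {a : lam.ord.ToType} :
    a ∈ Pset lam ↔ tyin lam a < (Cardinal.aleph 1).ord := by
  rw [Cardinal.lt_ord, ← card_tyin]
  exact Cardinal.countable_iff_lt_aleph_one _

lemma Pset_down {lam : Cardinal.{0}} {a b : lam.ord.ToType} (ha : a ∈ Pset lam)
    (hba : b < a) : b ∈ Pset lam := by
  rw [mem_Pset_iff] at ha ⊢
  exact lt_trans (tyin_lt_tyin.2 hba) ha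

lemma aleph_one_le_mk_Pset {lam : Cardinal.{0}} (h2 : Cardinal.aleph 2 ≤ lam) :
    Cardinal.aleph 1 ≤ #(Pset lam) := by
  have h1lam : (Cardinal.aleph 1).ord < lam.ord :=
    Cardinal.ord_lt_ord.2 (lt_of_lt_of_le (Cardinal.aleph_lt_aleph.2 one_lt_two) h2)
  set a₁ := enm lam (Cardinal.aleph 1).ord h1lam with ha₁
  have hsub : {b | b < a₁} ⊆ Pset lam := by
    intro b hb
    rw [mem_Pset_iff]
    have h := tyin_lt_tyin.2 hb
    rwa [ha₁, tyin_enm] at h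
  have hcard : #{b : lam.ord.ToType | b < a₁} = Cardinal.aleph 1 := by
    rw [card_tyin, ha₁, tyin_enm, Cardinal.card_ord]
  calc Cardinal.aleph 1 = #{b : lam.ord.ToType | b < a₁} := hcard.symm
    _ ≤ #(Pset lam) := Cardinal.mk_le_mk_of_subset hsub

lemma exists_strict_upper {lam : Cardinal.{0}} (hreg : lam.IsRegular)
    (h2 : Cardinal.aleph 2 ≤ lam) (u : Set lam.ord.ToType) (hu : u.Countable) :
    ∃ y, ∀ z ∈ u, z < y := by
  have hcof : lam.ord.cof = lam := hreg.cof_eq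
  have hlim : Order.IsSuccLimit lam.ord := Cardinal.isSuccLimit_ord hreg.1
  have hct : Countable ↥u := hu.to_subtype
  have haleph0 : (ℵ₀ : Cardinal) < lam :=
    lt_of_lt_of_le (by
      rw [← Cardinal.aleph_zero]
      exact Cardinal.aleph_lt_aleph.2 (by norm_num)) h2
  have hi : #↥u < lam.ord.cof := by
    rw [hcof]; exact lt_of_le_of_lt Cardinal.mk_le_aleph0 haleph0
  set f : ↥u → Ordinal := fun z => Order.succ (tyin lam z.1) with hf
  have hflt : ∀ z, f z < lam.ord := fun z => hlim.succ_lt (tyin_lt lam z.1)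
  have hsup := Ordinal.iSup_lt_ord hi hflt
  refine ⟨enm lam (iSup f) hsup, ?_⟩
  intro z hz
  have h1 : tyin lam z < iSup f :=
    lt_of_lt_of_le (Order.lt_succ _) (Ordinal.le_iSup f ⟨z, hz⟩)
  rw [← tyin_lt_tyin (lam := lam), tyin_enm]
  exact h1

lemma aleph2succ : (Cardinal.aleph 2 : Cardinal.{0}) = Order.succ (Cardinal.aleph 1) := by
  rw [← Cardinal.aleph_succ]
  congr 1
  norm_num

/-! ### The language and structure -/

def Lfun : ℕ → Type
  | 1 => ℕ ⊕ ℕ ⊕ Unit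
  | _ => Empty

def Lrel : ℕ → Type
  | 1 => Bool
  | 2 => Bool
  | _ => Empty

def L0 : FirstOrder.Language.{0, 0} := ⟨Lfun, Lrel⟩

instance : ∀ n, Countable (Lfun n)
  | 0 => inferInstanceAs (Countable Empty)
  | 1 => inferInstanceAs (Countable (ℕ ⊕ ℕ ⊕ Unit))
  | (_+2) => inferInstanceAs (Countable Empty)

instance : ∀ n, Countable (Lrel n)
  | 0 => inferInstanceAs (Countable Empty)
  | 1 => inferInstanceAs (Countable Bool)
  | 2 => inferInstanceAs (Countable Bool)
  | (_+3) => inferInstanceAs (Countable Empty)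

instance countFun : Countable (Σ n, L0.Functions n) :=
  inferInstanceAs (Countable (Σ n, Lfun n))
instance countRel : Countable (Σ n, L0.Relations n) :=
  inferInstanceAs (Countable (Σ n, Lrel n))

def lftSym : L0.Relations 1 := false
def pSym : L0.Relations 1 := true
def ltSym : L0.Relations 2 := false
def eSym : L0.Relations 2 := true

abbrev Car (α σ : Type) : Type := α ⊕ σ

def Str {α σ : Type} (Psub : Set α) (Erel : σ → α → Prop) (lt : α → α → Prop)
    (G : (ℕ ⊕ ℕ ⊕ Unit) → Car α σ → Car α σ) : L0.Structure (Car α σ) where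
  funMap {n} f x :=
    match n, f with
    | 1, i => G i (x 0)
  RelMap {n} r x :=
    match n, r with
    | 1, false => ∃ a, x 0 = Sum.inl a
    | 1, true => ∃ a, x 0 = Sum.inl a ∧ a ∈ Psub
    | 2, false => ∃ a b, x 0 = Sum.inl a ∧ x 1 = Sum.inl b ∧ lt a b
    | 2, true => ∃ s a, x 0 = Sum.inr s ∧ x 1 = Sum.inl a ∧ Erel s a

/-! ### The formulas -/

def iffF {n m : ℕ} (p q : StatFormula L0 n m) : StatFormula L0 n m :=
  .and (.not (.and p (.not q))) (.not (.and q (.not p)))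

def lft {n m : ℕ} (i : Fin n) : StatFormula L0 n m := .rel lftSym ![Term.var i]
def pF {n m : ℕ} (i : Fin n) : StatFormula L0 n m := .rel pSym ![Term.var i]
def ltF {n m : ℕ} (i j : Fin n) : StatFormula L0 n m := .rel ltSym ![Term.var i, Term.var j]
def eF {n m : ℕ} (i j : Fin n) : StatFormula L0 n m := .rel eSym ![Term.var i, Term.var j]

def phiStat : StatFormula L0 0 0 :=
  .stat (.exFO (.and (.not (lft 0))
    (.not (.exFO (.and (lft 1) (.not (iffF (eF 0 1) (.mem 1 0))))))))

def phiUnbdd : StatFormula L0 0 0 :=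
  .not (.stat (.not (.exFO (.and (lft 0)
    (.not (.exFO (.and (.and (lft 1) (.mem 1 0)) (.not (ltF 1 0)))))))))

def phiP : StatFormula L0 0 0 :=
  .stat (.exFO (.and (pF 0) (.not (.mem 0 0))))

/-! ### Semantics of the formulas (definitional unfoldings) -/

section Unfold
variable {α σ : Type} {Psub : Set α} {Erel : σ → α → Prop} {lt : α → α → Prop}
  {G : (ℕ ⊕ ℕ ⊕ Unit) → Car α σ → Car α σ}

lemma realize_phiStat (v : Fin 0 → Car α σ) (w : Fin 0 → Set (Car α σ)) :
    @Realize L0 (Car α σ) (Str Psub Erel lt G) 0 0 phiStat v w ↔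
      CtbStatIn Set.univ {U : Set (Car α σ) | U.Countable ∧ ∃ s : Car α σ,
        (¬ ∃ a, s = Sum.inl a) ∧
        ¬ ∃ x : Car α σ, (∃ a, x = Sum.inl a) ∧
          ¬ ((¬ ((∃ t a, s = Sum.inr t ∧ x = Sum.inl a ∧ Erel t a) ∧ ¬ x ∈ U)) ∧
             (¬ (x ∈ U ∧ ¬ (∃ t a, s = Sum.inr t ∧ x = Sum.inl a ∧ Erel t a))))} :=
  Iff.rfl

lemma realize_phiUnbdd (v : Fin 0 → Car α σ) (w : Fin 0 → Set (Car α σ)) :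
    @Realize L0 (Car α σ) (Str Psub Erel lt G) 0 0 phiUnbdd v w ↔
      ¬ CtbStatIn Set.univ {U : Set (Car α σ) | U.Countable ∧ ¬ ∃ y : Car α σ,
          (∃ a, y = Sum.inl a) ∧
          ¬ ∃ z : Car α σ, ((∃ a, z = Sum.inl a) ∧ z ∈ U) ∧
            ¬ (∃ a b, z = Sum.inl a ∧ y = Sum.inl b ∧ lt a b)} :=
  Iff.rfl

lemma realize_phiP (v : Fin 0 → Car α σ) (w : Fin 0 → Set (Car α σ)) :
    @Realize L0 (Car α σ) (Str Psub Erel lt G) 0 0 phiP v w ↔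
      CtbStatIn Set.univ {U : Set (Car α σ) | U.Countable ∧ ∃ x : Car α σ,
        (∃ a, x = Sum.inl a ∧ a ∈ Psub) ∧ x ∉ U} :=
  Iff.rfl

variable (B : @FirstOrder.Language.Substructure L0 (Car α σ) (Str Psub Erel lt G))

lemma realize_phiStat_sub (v : Fin 0 → ↥B) (w : Fin 0 → Set ↥B) :
    @Realize L0 ↥B (@FirstOrder.Language.Substructure.inducedStructure L0 (Car α σ)
        (Str Psub Erel lt G) B) 0 0 phiStat v w ↔
      CtbStatIn Set.univ {U : Set ↥B | U.Countable ∧ ∃ s : ↥B,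
        (¬ ∃ a, (s : Car α σ) = Sum.inl a) ∧
        ¬ ∃ x : ↥B, (∃ a, (x : Car α σ) = Sum.inl a) ∧
          ¬ ((¬ ((∃ t a, (s : Car α σ) = Sum.inr t ∧ (x : Car α σ) = Sum.inl a ∧ Erel t a) ∧
                ¬ x ∈ U)) ∧
             (¬ (x ∈ U ∧ ¬ (∃ t a, (s : Car α σ) = Sum.inr t ∧ (x : Car α σ) = Sum.inl a ∧
                Erel t a))))} :=
  Iff.rfl

lemma realize_phiUnbdd_sub (v : Fin 0 → ↥B) (w : Fin 0 → Set ↥B) :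
    @Realize L0 ↥B (@FirstOrder.Language.Substructure.inducedStructure L0 (Car α σ)
        (Str Psub Erel lt G) B) 0 0 phiUnbdd v w ↔
      ¬ CtbStatIn Set.univ {U : Set ↥B | U.Countable ∧ ¬ ∃ y : ↥B,
          (∃ a, (y : Car α σ) = Sum.inl a) ∧
          ¬ ∃ z : ↥B, ((∃ a, (z : Car α σ) = Sum.inl a) ∧ z ∈ U) ∧
            ¬ (∃ a b, (z : Car α σ) = Sum.inl a ∧ (y : Car α σ) = Sum.inl b ∧ lt a b)} :=
  Iff.rfl

lemma realize_phiP_sub (v : Fin 0 → ↥B) (w : Fin 0 → Set ↥B) :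
    @Realize L0 ↥B (@FirstOrder.Language.Substructure.inducedStructure L0 (Car α σ)
        (Str Psub Erel lt G) B) 0 0 phiP v w ↔
      CtbStatIn Set.univ {U : Set ↥B | U.Countable ∧ ∃ x : ↥B,
        (∃ a, (x : Car α σ) = Sum.inl a ∧ a ∈ Psub) ∧ x ∉ U} :=
  Iff.rfl

end Unfold
end SDLSAux

/-- `SDLS⁻(ℒ^{ℵ₀}_{stat}, <ℵ₂)` implies the reflection
principle `RP`. -/
theorem SDLSminus_implies_RP (h : SDLSminus (Cardinal.aleph 2)) : RP := by
  classical
  intro lam hreg h2 S hSct hSstat X hXcard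
  have hmkα : #(lam.ord.ToType) = lam := by rw [Cardinal.mk_toType, Cardinal.card_ord]
  have haleph01 : (ℵ₀ : Cardinal) < Cardinal.aleph 1 := Cardinal.aleph0_lt_aleph_one
  have haleph12 : Cardinal.aleph 1 ≤ Cardinal.aleph 2 := Cardinal.aleph_le_aleph.2 one_le_two
  have hlam0 : (ℵ₀ : Cardinal) < lam := lt_of_lt_of_le (lt_of_lt_of_le haleph01 haleph12) h2
  have hUncα : Uncountable lam.ord.ToType := by
    rw [← Cardinal.aleph0_lt_mk_iff (α := lam.ord.ToType), hmkα]
    exact hlam0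
  have hneα : Nonempty lam.ord.ToType := Cardinal.mk_ne_zero_iff.1 (by
    rw [hmkα]; exact ne_of_gt (lt_trans Cardinal.aleph0_pos hlam0))
  have hmkP : Cardinal.aleph 1 ≤ #(SDLSAux.Pset lam) := SDLSAux.aleph_one_le_mk_Pset h2
  -- the function catching X
  have hXP : #↥X ≤ #↥(SDLSAux.Pset lam) := by rw [hXcard]; exact hmkP
  obtain ⟨j⟩ := (Cardinal.le_def _ _).1 hXP
  set F : lam.ord.ToType → lam.ord.ToType := fun a =>
    if h : ∃ x : ↥X, ((j x : ↥(SDLSAux.Pset lam)) : lam.ord.ToType) = a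
    then (h.choose : lam.ord.ToType) else a with hF
  have hFX : ∀ x ∈ X, ∃ a ∈ SDLSAux.Pset lam, F a = x := by
    intro x hx
    refine ⟨((j ⟨x, hx⟩ : ↥(SDLSAux.Pset lam)) : lam.ord.ToType), (j ⟨x, hx⟩).2, ?_⟩
    rw [hF]
    have hex : ∃ x' : ↥X, ((j x' : ↥(SDLSAux.Pset lam)) : lam.ord.ToType) =
        ((j ⟨x, hx⟩ : ↥(SDLSAux.Pset lam)) : lam.ord.ToType) := ⟨⟨x, hx⟩, rfl⟩
    simp only [dif_pos hex]
    have h1 : j hex.choose = j ⟨x, hx⟩ := Subtype.ext hex.choose_spec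
    have h2' : hex.choose = ⟨x, hx⟩ := j.injective h1
    rw [h2']
  -- the predecessor enumerations
  have hdex : ∀ a : lam.ord.ToType, ∃ g : ℕ → lam.ord.ToType,
      a ∈ SDLSAux.Pset lam → ∀ b, b < a → ∃ k, g k = b := by
    intro a
    by_cases hct : {b : lam.ord.ToType | b < a}.Countable
    · rcases Set.eq_empty_or_nonempty {b : lam.ord.ToType | b < a} with hemp | hne
      · exact ⟨fun _ => a, fun _ b hb =>
          absurd hb (Set.eq_empty_iff_forall_notMem.1 hemp b)⟩
      · obtain ⟨g, hg⟩ := hct.exists_eq_range hne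
        refine ⟨g, fun _ b hb => ?_⟩
        have hm : b ∈ Set.range g := by rw [← hg]; exact hb
        exact hm
    · exact ⟨fun _ => a, fun hmem => absurd hmem hct⟩
  choose d hd using hdex
  -- the code enumerations
  have heex : ∀ t : ↥S, ∃ g : ℕ → lam.ord.ToType, ∀ b ∈ (t : Set lam.ord.ToType), ∃ k, g k = b := by
    intro t
    rcases Set.eq_empty_or_nonempty (t : Set lam.ord.ToType) with hemp | hne
    · exact ⟨fun _ => Classical.arbitrary _, fun b hb =>
        absurd hb (Set.eq_empty_iff_forall_notMem.1 hemp b)⟩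
    · obtain ⟨g, hg⟩ := (hSct t.1 t.2).exists_eq_range hne
      refine ⟨g, fun b hb => ?_⟩
      have hm : b ∈ Set.range g := by rw [← hg]; exact hb
      exact hm
  choose eS heS using heex
  -- the structure
  set G : (ℕ ⊕ ℕ ⊕ Unit) → SDLSAux.Car lam.ord.ToType ↥S → SDLSAux.Car lam.ord.ToType ↥S :=
    fun i x =>
    match i, x with
    | Sum.inl k, Sum.inl a => Sum.inl (d a k)
    | Sum.inr (Sum.inl k), Sum.inr t => Sum.inl (eS t k)
    | Sum.inr (Sum.inr _), Sum.inl a => Sum.inl (F a)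
    | _, x => x
    with hG
  letI inst : SDLSAux.L0.Structure (SDLSAux.Car lam.ord.ToType ↥S) :=
    SDLSAux.Str (SDLSAux.Pset lam) (fun t a => a ∈ (t : Set lam.ord.ToType)) (· < ·) G
  have hUncCar : Uncountable (SDLSAux.Car lam.ord.ToType ↥S) := inferInstance
  obtain ⟨B, hBcard, hBel⟩ := h SDLSAux.L0 (SDLSAux.Car lam.ord.ToType ↥S)
    SDLSAux.countFun SDLSAux.countRel hUncCar
  -- the reflected set
  set Y : Set lam.ord.ToType := {a | Sum.inl a ∈ B} with hYdef
  -- closure of B under the functions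
  have hGmem : ∀ (i : ℕ ⊕ ℕ ⊕ Unit) (c : SDLSAux.Car lam.ord.ToType ↥S),
      c ∈ B → G i c ∈ B := by
    intro i c hc
    have hx : ∀ j : Fin 1, (![c] : Fin 1 → SDLSAux.Car lam.ord.ToType ↥S) j ∈ B := by
      intro j; fin_cases j; simpa using hc
    exact B.fun_mem (n := 1) i ![c] hx
  have hdY : ∀ a, a ∈ Y → a ∈ SDLSAux.Pset lam → ∀ b, b < a → b ∈ Y := by
    intro a haY haP b hb
    obtain ⟨k, hk⟩ := hd a haP b hb
    have h1 := hGmem (Sum.inl k) (Sum.inl a) haY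
    have h2' : G (Sum.inl k) (Sum.inl a) = Sum.inl (d a k) := by rw [hG]
    rw [h2', hk] at h1
    exact h1
  have heYS : ∀ t : ↥S, (Sum.inr t : SDLSAux.Car lam.ord.ToType ↥S) ∈ B →
      (t : Set lam.ord.ToType) ⊆ Y := by
    intro t ht b hb
    obtain ⟨k, hk⟩ := heS t b hb
    have h1 := hGmem (Sum.inr (Sum.inl k)) (Sum.inr t) ht
    have h2' : G (Sum.inr (Sum.inl k)) (Sum.inr t) = Sum.inl (eS t k) := by rw [hG]
    rw [h2', hk] at h1
    exact h1
  have hFY : ∀ a, a ∈ Y → F a ∈ Y := by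
    intro a haY
    have h1 := hGmem (Sum.inr (Sum.inr ())) (Sum.inl a) haY
    have h2' : G (Sum.inr (Sum.inr ())) (Sum.inl a) = Sum.inl (F a) := by rw [hG]
    rw [h2'] at h1
    exact h1
  -- the transfers
  have tStat := (SDLSAux.realize_phiStat_sub B Fin.elim0 Fin.elim0).symm.trans
    ((hBel 0 SDLSAux.phiStat Fin.elim0).trans (SDLSAux.realize_phiStat _ _))
  have tUnbdd := (SDLSAux.realize_phiUnbdd_sub B Fin.elim0 Fin.elim0).symm.trans
    ((hBel 0 SDLSAux.phiUnbdd Fin.elim0).trans (SDLSAux.realize_phiUnbdd _ _))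
  have tP := (SDLSAux.realize_phiP_sub B Fin.elim0 Fin.elim0).symm.trans
    ((hBel 0 SDLSAux.phiP Fin.elim0).trans (SDLSAux.realize_phiP _ _))
  -- ambient truth of phiStat
  have hAmbStat : CtbStatIn Set.univ
      {U : Set (SDLSAux.Car lam.ord.ToType ↥S) | U.Countable ∧
        ∃ s : SDLSAux.Car lam.ord.ToType ↥S, (¬ ∃ a, s = Sum.inl a) ∧
        ¬ ∃ x : SDLSAux.Car lam.ord.ToType ↥S, (∃ a, x = Sum.inl a) ∧
          ¬ ((¬ ((∃ t a, s = Sum.inr t ∧ x = Sum.inl a ∧ a ∈ (t : Set lam.ord.ToType)) ∧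
                ¬ x ∈ U)) ∧
             (¬ (x ∈ U ∧ ¬ (∃ t a, s = Sum.inr t ∧ x = Sum.inl a ∧
                a ∈ (t : Set lam.ord.ToType)))))} := by
    have hl := SDLSAux.lift_stat
      (Sum.inl : lam.ord.ToType → SDLSAux.Car lam.ord.ToType ↥S) Sum.inl_injective hSstat
    refine SDLSAux.stat_mono hl ?_
    rintro U ⟨hUct, hUS⟩
    refine ⟨hUct, Sum.inr ⟨_, hUS⟩, by simp, ?_⟩
    rintro ⟨x, ⟨a, rfl⟩, hbad⟩
    apply hbad
    constructor
    · rintro ⟨⟨t, a', ht, ha', hmem⟩, hnot⟩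
      obtain rfl : t = ⟨Sum.inl ⁻¹' U, hUS⟩ := (Sum.inr_injective ht).symm
      obtain rfl : a' = a := (Sum.inl_injective ha').symm
      exact hnot hmem
    · rintro ⟨hxU, hnE⟩
      exact hnE ⟨⟨Sum.inl ⁻¹' U, hUS⟩, a, rfl, rfl, hxU⟩
  -- ambient truth of phiUnbdd
  have hAmbUnbdd : ¬ CtbStatIn Set.univ
      {U : Set (SDLSAux.Car lam.ord.ToType ↥S) | U.Countable ∧
        ¬ ∃ y : SDLSAux.Car lam.ord.ToType ↥S, (∃ a, y = Sum.inl a) ∧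
          ¬ ∃ z : SDLSAux.Car lam.ord.ToType ↥S, ((∃ a, z = Sum.inl a) ∧ z ∈ U) ∧
            ¬ (∃ a b, z = Sum.inl a ∧ y = Sum.inl b ∧ a < b)} := by
    intro hst
    obtain ⟨U, ⟨hUct, hUbad⟩, -⟩ := hst _ SDLSAux.club_countable
    apply hUbad
    obtain ⟨y₀, hy₀⟩ := SDLSAux.exists_strict_upper hreg h2 (Sum.inl ⁻¹' U)
      (hUct.preimage Sum.inl_injective)
    refine ⟨Sum.inl y₀, ⟨y₀, rfl⟩, ?_⟩
    rintro ⟨z, ⟨⟨a, rfl⟩, hzU⟩, hnlt⟩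
    exact hnlt ⟨a, y₀, rfl, rfl, hy₀ a hzU⟩
  -- ambient truth of phiP
  have hAmbP : CtbStatIn Set.univ
      {U : Set (SDLSAux.Car lam.ord.ToType ↥S) | U.Countable ∧
        ∃ x : SDLSAux.Car lam.ord.ToType ↥S,
          (∃ a, x = Sum.inl a ∧ a ∈ SDLSAux.Pset lam) ∧ x ∉ U} := by
    intro C hC
    obtain ⟨c, hcC, -⟩ := hC.2.1 ∅ (Set.empty_subset _) Set.countable_empty
    have hcct : c.Countable := (hC.1 c hcC).2
    have hns : ¬ (SDLSAux.Pset lam ⊆ {a | Sum.inl a ∈ c}) := by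
      intro hsub
      have h1 : #↥(SDLSAux.Pset lam) ≤ #↥{a : lam.ord.ToType | Sum.inl a ∈ c} :=
        Cardinal.mk_le_mk_of_subset hsub
      have h2' : ({a : lam.ord.ToType | Sum.inl a ∈ c}).Countable :=
        hcct.preimage Sum.inl_injective
      rw [Cardinal.countable_iff_lt_aleph_one] at h2'
      exact absurd (lt_of_le_of_lt (le_trans hmkP h1) h2') (lt_irrefl _)
    obtain ⟨a, haP, hac⟩ := Set.not_subset.1 hns
    exact ⟨c, ⟨hcct, Sum.inl a, ⟨a, rfl, haP⟩, hac⟩, hcC⟩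
  -- internal consequence of phiP : uncountability
  have hQunc : ¬ ({a | a ∈ Y ∧ a ∈ SDLSAux.Pset lam}).Countable := by
    intro hQct
    have hQBct : ({x : ↥B | ∃ a, (x : SDLSAux.Car lam.ord.ToType ↥S) = Sum.inl a ∧
        a ∈ SDLSAux.Pset lam}).Countable := by
      rw [← Set.countable_coe_iff]
      haveI hQc : Countable ↥{a | a ∈ Y ∧ a ∈ SDLSAux.Pset lam} := hQct.to_subtype
      have hfex : ∀ x : ↥{x : ↥B | ∃ a, (x : SDLSAux.Car lam.ord.ToType ↥S) = Sum.inl a ∧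
          a ∈ SDLSAux.Pset lam}, ∃ a : ↥{a | a ∈ Y ∧ a ∈ SDLSAux.Pset lam},
          ((x : ↥B) : SDLSAux.Car lam.ord.ToType ↥S) = Sum.inl (a : lam.ord.ToType) := by
        rintro ⟨x, a, hxa, haP⟩
        refine ⟨⟨a, ?_, haP⟩, hxa⟩
        show Sum.inl a ∈ B
        rw [← hxa]
        exact x.2
      choose f hf using hfex
      refine Function.Injective.countable (f := f) ?_
      intro x y hxy
      apply Subtype.ext
      apply Subtype.ext
      rw [hf x, hf y, hxy]
    have hIntP := tP.mpr hAmbP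
    obtain ⟨U, ⟨hUct, x, hxQB, hxnU⟩, hUcl⟩ := hIntP _ (SDLSAux.club_contains _ hQBct)
    exact hxnU (hUcl.2 hxQB)
  -- Pset is contained in Y
  have hPsetQ : SDLSAux.Pset lam ⊆ {a | a ∈ Y ∧ a ∈ SDLSAux.Pset lam} := by
    intro q hq
    by_contra hqQ
    apply hQunc
    have hsub : {a | a ∈ Y ∧ a ∈ SDLSAux.Pset lam} ⊆ {b | b < q} := by
      intro r hr
      rcases lt_trichotomy r q with hlt | heq | hgt
      · exact hlt
      · exact absurd (heq ▸ hr) hqQ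
      · exact absurd (⟨hdY r hr.1 hr.2 q hgt, hq⟩ :
          q ∈ {a | a ∈ Y ∧ a ∈ SDLSAux.Pset lam}) hqQ
    exact Set.Countable.mono hsub hq
  have hXY : X ⊆ Y := by
    intro x hx
    obtain ⟨a, haP, hFa⟩ := hFX x hx
    have haY : a ∈ Y := (hPsetQ haP).1
    rw [← hFa]
    exact hFY a haY
  -- internal consequence of phiUnbdd : strict bounds
  have hbound : ∀ Z, Z ⊆ Y → Z.Countable → ∃ y ∈ Y, ∀ z ∈ Z, z < y := by
    intro Z hZY hZct
    have hIntU := tUnbdd.mpr hAmbUnbdd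
    rw [CtbStatIn] at hIntU
    obtain ⟨C, hCnot⟩ := not_forall.1 hIntU
    have hCclub : CtbClubIn (Set.univ : Set ↥B) C := by
      by_contra hnc
      exact hCnot (fun hcl => absurd hcl hnc)
    have hCem := fun hne => hCnot (fun _ => hne)
    have hZBct : ({x : ↥B | ∃ a ∈ Z, (x : SDLSAux.Car lam.ord.ToType ↥S) = Sum.inl a}).Countable := by
      have he : {x : ↥B | ∃ a ∈ Z, (x : SDLSAux.Car lam.ord.ToType ↥S) = Sum.inl a} =
          (Subtype.val : ↥B → SDLSAux.Car lam.ord.ToType ↥S) ⁻¹' (Sum.inl '' Z) := by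
        ext x
        simp only [Set.mem_setOf_eq, Set.mem_preimage, Set.mem_image]
        constructor
        · rintro ⟨a, ha, hx⟩; exact ⟨a, ha, hx.symm⟩
        · rintro ⟨a, ha, hx⟩; exact ⟨a, ha, hx.symm⟩
      rw [he]
      exact (hZct.image _).preimage Subtype.val_injective
    obtain ⟨U, hUC, hUsub⟩ := hCclub.2.1 _ (Set.subset_univ _) hZBct
    have hUct : U.Countable := (hCclub.1 U hUC).2
    have hy : ∃ y : ↥B, (∃ a, (y : SDLSAux.Car lam.ord.ToType ↥S) = Sum.inl a) ∧
        ¬ ∃ z : ↥B, ((∃ a, (z : SDLSAux.Car lam.ord.ToType ↥S) = Sum.inl a) ∧ z ∈ U) ∧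
          ¬ (∃ a b, (z : SDLSAux.Car lam.ord.ToType ↥S) = Sum.inl a ∧
            (y : SDLSAux.Car lam.ord.ToType ↥S) = Sum.inl b ∧ a < b) := by
      by_contra hny
      exact hCem ⟨U, ⟨hUct, hny⟩, hUC⟩
    obtain ⟨y, ⟨b, hyb⟩, hnz⟩ := hy
    refine ⟨b, ?_, ?_⟩
    · show Sum.inl b ∈ B
      rw [← hyb]
      exact y.2
    · intro z hzZ
      have hzY : z ∈ Y := hZY hzZ
      by_contra hnlt
      apply hnz
      refine ⟨⟨Sum.inl z, hzY⟩, ⟨⟨z, rfl⟩, hUsub ⟨z, hzZ, rfl⟩⟩, ?_⟩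
      rintro ⟨a, b', ha, hb', hab⟩
      obtain rfl : a = z := (Sum.inl_injective ha).symm
      obtain rfl : b = b' := Sum.inl_injective (hyb.symm.trans hb')
      exact hnlt hab
  -- internal consequence of phiStat : the reflection
  have hIntStat := tStat.mpr hAmbStat
  have hproj : CtbStatIn Y {x | x ∈ S ∧ x ⊆ Y} := by
    refine SDLSAux.project_stat (fun a : ↥Y => (⟨Sum.inl a.1, a.2⟩ : ↥B)) ?_ hIntStat ?_
    · intro x y hxy
      apply Subtype.ext
      exact Sum.inl_injective (congrArg Subtype.val hxy)
    · rintro U ⟨hUct, sB, hnleft, hbody⟩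
      rcases hsB : (sB : SDLSAux.Car lam.ord.ToType ↥S) with a | t
      · exact absurd ⟨a, hsB⟩ hnleft
      · refine ⟨t.1, t.2, heYS t (by rw [← hsB]; exact sB.2), ?_⟩
        intro a
        have hcc := not_not.1 (fun hq => hbody ⟨(⟨Sum.inl a.1, a.2⟩ : ↥B), ⟨a.1, rfl⟩, hq⟩)
        constructor
        · intro hmemU
          by_contra hns
          exact hcc.2 ⟨hmemU, fun hE => by
            obtain ⟨t', a', ht', ha', hm⟩ := hE
            obtain rfl : t' = t := Sum.inr_injective (hsB ▸ ht' : Sum.inr t = Sum.inr t').symm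
            obtain rfl : a' = a.1 := (Sum.inl_injective ha').symm
            exact hns hm⟩
        · intro hat
          by_contra hnU
          exact hcc.1 ⟨⟨t, a.1, hsB, rfl, hat⟩, hnU⟩
  -- cardinalities
  have hBle : #↥B ≤ Cardinal.aleph 1 := by
    rw [SDLSAux.aleph2succ] at hBcard
    exact Order.lt_succ_iff.1 hBcard
  have hYle : #↥Y ≤ #↥B :=
    Cardinal.mk_le_of_injective (f := fun a : ↥Y => (⟨Sum.inl a.1, a.2⟩ : ↥B)) (by
      intro x y hxy
      apply Subtype.ext
      exact Sum.inl_injective (congrArg Subtype.val hxy))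
  have hYcard : #↥Y = Cardinal.aleph 1 :=
    le_antisymm (hYle.trans hBle) (by rw [← hXcard]; exact Cardinal.mk_le_mk_of_subset hXY)
  -- conclusion
  refine ⟨Y, hYcard, ⟨⟨Y, subset_rfl, fun y hy => ⟨y, hy, le_rfl⟩, hYcard⟩, ?_⟩, hXY, hproj⟩
  intro Z hZY hZcof
  by_contra hZlt
  have hZct : Z.Countable := by
    rw [Cardinal.countable_iff_lt_aleph_one]
    exact not_le.1 hZlt
  obtain ⟨y, hyY, hlt⟩ := hbound Z hZY hZct
  obtain ⟨z, hzZ, hyz⟩ := hZcof y hyY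
  exact absurd hyz (not_le.2 (hlt z hzZ))
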